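/- arXiv:2603.14681 — 2 statements merged into one kernel-verified Lean document; each statement's English description precedes it below -/
import Mathlib

section
/- With L_{k,j} defined by the forward segmentation recursion and R_{k,i} defined by the backward recursion R_{0,n}=1, R_{0,i}=0 for i<n, R_{k+1,i} = Σ_{h=i+1}^{n-k} A_{i,h}·R_{k,h}, the following split identity holds for any k ≥ 1, any p with 1 ≤ p ≤ k−1, and any h with p ≤ h ≤ n−(k−p): the total weight of all k-segmentations of [1..n] whose p-th boundary equals h is exactly L_{p,h}·R_{k−p,h}. Consequently L_{k,n} = Σ_h L_{p,h}·R_{k−p,h}. -/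
open Finset
open scoped Classical

namespace DPSplitAux

lemma strictMono_cons_iff {β : Type*} [Preorder β] {m : ℕ} (x : β) (t : Fin (m+1) → β) :
    StrictMono (Fin.cons x t : Fin (m+2) → β) ↔ x < t 0 ∧ StrictMono t := by
  rw [Fin.strictMono_iff_lt_succ, Fin.strictMono_iff_lt_succ]
  constructor
  · intro H
    refine ⟨by simpa using H 0, fun i => ?_⟩
    have := H i.succ
    rwa [← Fin.succ_castSucc, Fin.cons_succ, Fin.cons_succ] at this
  · rintro ⟨h0, H⟩ i
    induction i using Fin.cases with
    | zero => simpa using h0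
    | succ j =>
      rw [← Fin.succ_castSucc, Fin.cons_succ, Fin.cons_succ]
      exact H j

lemma strictMono_snoc_iff {β : Type*} [Preorder β] {m : ℕ} (t : Fin (m+1) → β) (y : β) :
    StrictMono (Fin.snoc t y : Fin (m+2) → β) ↔ StrictMono t ∧ t (Fin.last m) < y := by
  rw [Fin.strictMono_iff_lt_succ, Fin.strictMono_iff_lt_succ]
  constructor
  · intro H
    refine ⟨fun i => ?_, ?_⟩
    · have := H i.castSucc
      rwa [Fin.succ_castSucc, Fin.snoc_castSucc, Fin.snoc_castSucc] at this
    · have := H (Fin.last m)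
      rwa [Fin.snoc_castSucc, Fin.succ_last, Fin.snoc_last] at this
  · rintro ⟨H, hl⟩ i
    induction i using Fin.lastCases with
    | last => rw [Fin.snoc_castSucc, Fin.succ_last, Fin.snoc_last]; exact hl
    | cast j =>
      rw [Fin.succ_castSucc, Fin.snoc_castSucc, Fin.snoc_castSucc]
      exact H j

lemma lower_bound {N m : ℕ} (t : Fin (m+1) → Fin N) (ht : StrictMono t) (i : Fin (m+1)) :
    (t 0).val + i.val ≤ (t i).val := by
  induction i using Fin.induction with
  | zero => simp
  | succ j ih =>
    have h1 : (t j.castSucc).val < (t j.succ).val := ht Fin.castSucc_lt_succ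
    simp only [Fin.val_succ, Fin.coe_castSucc] at *
    omega

noncomputable def seg (n : ℕ) (A : ℕ → ℕ → ℝ) (m a b : ℕ) : ℝ :=
  ∑ t ∈ Finset.univ.filter (fun t : Fin (m+1) → Fin (n+1) =>
      StrictMono t ∧ (t 0).val = a ∧ (t (Fin.last m)).val = b),
    ∏ q : Fin m, A (t q.castSucc).val (t q.succ).val

noncomputable def segP (n : ℕ) (A : ℕ → ℕ → ℝ) (m a b : ℕ) (p : Fin (m+1)) (h : ℕ) : ℝ :=
  ∑ t ∈ Finset.univ.filter (fun t : Fin (m+1) → Fin (n+1) =>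
      StrictMono t ∧ (t 0).val = a ∧ (t (Fin.last m)).val = b ∧ (t p).val = h),
    ∏ q : Fin m, A (t q.castSucc).val (t q.succ).val

variable (n : ℕ) (A : ℕ → ℕ → ℝ)

lemma prod_cons {m : ℕ} (x : Fin (n+1)) (t' : Fin (m+1) → Fin (n+1)) :
    (∏ q : Fin (m+1), A ((Fin.cons x t' : Fin (m+2) → Fin (n+1)) q.castSucc).val
        ((Fin.cons x t' : Fin (m+2) → Fin (n+1)) q.succ).val)
      = A x.val (t' 0).val * ∏ q : Fin m, A (t' q.castSucc).val (t' q.succ).val := by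
  rw [Fin.prod_univ_succ]
  congr 1


lemma prod_snoc {m : ℕ} (t' : Fin (m+1) → Fin (n+1)) (y : Fin (n+1)) :
    (∏ q : Fin (m+1), A ((Fin.snoc t' y : Fin (m+2) → Fin (n+1)) q.castSucc).val
        ((Fin.snoc t' y : Fin (m+2) → Fin (n+1)) q.succ).val)
      = (∏ q : Fin m, A (t' q.castSucc).val (t' q.succ).val) * A (t' (Fin.last m)).val y.val := by
  rw [Fin.prod_univ_castSucc]
  congr 1
  · exact Finset.prod_congr rfl fun q _ => by
      rw [Fin.succ_castSucc, Fin.snoc_castSucc, Fin.snoc_castSucc]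
  · rw [Fin.snoc_castSucc, Fin.succ_last, Fin.snoc_last]

lemma seg_eq_zero_of_lt {m a b : ℕ} (hab : b < a + m) : seg n A m a b = 0 := by
  rw [seg, Finset.filter_false_of_mem, Finset.sum_empty]
  rintro t - ⟨hSM, h0, hl⟩
  have := lower_bound t hSM (Fin.last m)
  rw [Fin.val_last] at this
  omega

lemma seg_zero {a b : ℕ} (ha : a ≤ n) : seg n A 0 a b = if a = b then 1 else 0 := by
  split_ifs with hab
  · subst hab
    rw [seg]
    have : (Finset.univ.filter (fun t : Fin 1 → Fin (n+1) =>
        StrictMono t ∧ (t 0).val = a ∧ (t (Fin.last 0)).val = a))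
        = {fun _ => (⟨a, by omega⟩ : Fin (n+1))} := by
      ext t
      simp only [Finset.mem_filter, Finset.mem_univ, true_and, Finset.mem_singleton]
      constructor
      · rintro ⟨-, h0, -⟩
        funext i
        have : i = 0 := Subsingleton.elim i 0
        subst this
        exact Fin.ext h0
      · rintro rfl
        refine ⟨fun i j hij => absurd hij (by omega), rfl, rfl⟩
    rw [this]
    simp
  · rw [seg, Finset.filter_false_of_mem, Finset.sum_empty]
    rintro t - ⟨-, h0, hl⟩
    simp only [Fin.last_zero] at hl
    omega

lemma cons_last {β : Type*} {m : ℕ} (x : β) (t' : Fin (m+1) → β) :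
    (Fin.cons x t' : Fin (m+2) → β) (Fin.last (m+1)) = t' (Fin.last m) := by
  rw [← Fin.succ_last, Fin.cons_succ]

lemma segP_succ {m : ℕ} (a b : ℕ) (p : Fin (m+1)) (h : ℕ) (ha : a ≤ n) :
    segP n A (m+1) a b p.succ h
      = ∑ x ∈ Finset.Icc (a+1) n, A a x * segP n A m x b p h := by
  have step1 : segP n A (m+1) a b p.succ h
      = ∑ x : Fin (n+1), ∑ t' : Fin (m+1) → Fin (n+1),
          (if StrictMono (Fin.cons x t' : Fin (m+2) → Fin (n+1)) ∧
              ((Fin.cons x t' : Fin (m+2) → Fin (n+1)) 0).val = a ∧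
              ((Fin.cons x t' : Fin (m+2) → Fin (n+1)) (Fin.last (m+1))).val = b ∧
              ((Fin.cons x t' : Fin (m+2) → Fin (n+1)) p.succ).val = h
            then ∏ q : Fin (m+1),
              A ((Fin.cons x t' : Fin (m+2) → Fin (n+1)) q.castSucc).val
                ((Fin.cons x t' : Fin (m+2) → Fin (n+1)) q.succ).val
            else 0) := by
    have e1 : segP n A (m+1) a b p.succ h
        = ∑ z : Fin (n+1) × (Fin (m+1) → Fin (n+1)),
            (if StrictMono (Fin.cons z.1 z.2 : Fin (m+2) → Fin (n+1)) ∧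
                ((Fin.cons z.1 z.2 : Fin (m+2) → Fin (n+1)) 0).val = a ∧
                ((Fin.cons z.1 z.2 : Fin (m+2) → Fin (n+1)) (Fin.last (m+1))).val = b ∧
                ((Fin.cons z.1 z.2 : Fin (m+2) → Fin (n+1)) p.succ).val = h
              then ∏ q : Fin (m+1),
                A ((Fin.cons z.1 z.2 : Fin (m+2) → Fin (n+1)) q.castSucc).val
                  ((Fin.cons z.1 z.2 : Fin (m+2) → Fin (n+1)) q.succ).val
              else 0) := by
      rw [segP, Finset.sum_filter]
      exact (Fintype.sum_equiv (Fin.consEquiv fun _ => Fin (n+1)) _ _ fun z => rfl).symm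
    rw [e1, Fintype.sum_prod_type]
  rw [step1]
  have step2 : ∀ (x : Fin (n+1)) (t' : Fin (m+1) → Fin (n+1)),
      (if StrictMono (Fin.cons x t' : Fin (m+2) → Fin (n+1)) ∧
          ((Fin.cons x t' : Fin (m+2) → Fin (n+1)) 0).val = a ∧
          ((Fin.cons x t' : Fin (m+2) → Fin (n+1)) (Fin.last (m+1))).val = b ∧
          ((Fin.cons x t' : Fin (m+2) → Fin (n+1)) p.succ).val = h
        then ∏ q : Fin (m+1),
          A ((Fin.cons x t' : Fin (m+2) → Fin (n+1)) q.castSucc).val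
            ((Fin.cons x t' : Fin (m+2) → Fin (n+1)) q.succ).val
        else 0)
      = (if x.val = a ∧ (x < t' 0 ∧ StrictMono t' ∧
            (t' (Fin.last m)).val = b ∧ (t' p).val = h)
          then A x.val (t' 0).val * ∏ q : Fin m, A (t' q.castSucc).val (t' q.succ).val
          else 0) := by
    intro x t'
    rw [prod_cons]
    refine if_congr ?_ rfl rfl
    rw [strictMono_cons_iff, cons_last, Fin.cons_zero, Fin.cons_succ]
    tauto
  simp only [step2]
  have ha' : a < n + 1 := by omega
  rw [Finset.sum_eq_single (⟨a, ha'⟩ : Fin (n+1))]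
  · have step3 : ∀ t' : Fin (m+1) → Fin (n+1),
        (if ((⟨a, ha'⟩ : Fin (n+1))).val = a ∧ ((⟨a, ha'⟩ : Fin (n+1)) < t' 0 ∧
              StrictMono t' ∧ (t' (Fin.last m)).val = b ∧ (t' p).val = h)
          then A ((⟨a, ha'⟩ : Fin (n+1))).val (t' 0).val *
            ∏ q : Fin m, A (t' q.castSucc).val (t' q.succ).val
          else 0)
        = (if a < (t' 0).val ∧ StrictMono t' ∧ (t' (Fin.last m)).val = b ∧ (t' p).val = h
            then A a (t' 0).val * ∏ q : Fin m, A (t' q.castSucc).val (t' q.succ).val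
            else 0) := by
      intro t'
      refine if_congr ?_ rfl rfl
      constructor
      · rintro ⟨-, h2⟩
        exact h2
      · intro hh
        exact ⟨rfl, hh⟩
    refine Eq.trans (Finset.sum_congr rfl fun t' _ => step3 t') ?_
    rw [← Finset.sum_filter]
    rw [← Finset.sum_fiberwise_of_maps_to (g := fun t' : Fin (m+1) → Fin (n+1) => (t' 0).val)
      (t := Finset.Icc (a+1) n) (fun t' ht' => by
        have hc := (Finset.mem_filter.mp ht').2
        simp only [Finset.mem_Icc]
        exact ⟨hc.1, by omega⟩)]
    refine Finset.sum_congr rfl fun x hx => ?_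
    simp only [Finset.mem_Icc] at hx
    rw [segP, Finset.mul_sum, Finset.filter_filter]
    refine Finset.sum_congr (Finset.filter_congr fun t' _ => ?_) fun t' ht' => ?_
    · constructor
      · rintro ⟨⟨h1, h2, h3, h4⟩, h5⟩
        exact ⟨h2, h5, h3, h4⟩
      · rintro ⟨h1, h2, h3, h4⟩
        exact ⟨⟨by omega, h1, h3, h4⟩, h2⟩
    · have hv := (Finset.mem_filter.mp ht').2.2.1
      rw [hv]
  · intro x _ hx
    refine Finset.sum_eq_zero fun t' _ => ?_
    rw [if_neg]
    rintro ⟨h1, -⟩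
    exact hx (Fin.ext h1)
  · intro hmem
    exact absurd (Finset.mem_univ _) hmem

lemma snoc_zero' {β : Type*} {m : ℕ} (t' : Fin (m+1) → β) (y : β) :
    (Fin.snoc t' y : Fin (m+2) → β) 0 = t' 0 := by
  rw [← Fin.castSucc_zero, Fin.snoc_castSucc]

lemma seg_snoc {m : ℕ} (a b : ℕ) (hb : b ≤ n) :
    seg n A (m+1) a b = ∑ x ∈ Finset.range b, seg n A m a x * A x b := by
  have step1 : seg n A (m+1) a b
      = ∑ y : Fin (n+1), ∑ t' : Fin (m+1) → Fin (n+1),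
          (if StrictMono (Fin.snoc t' y : Fin (m+2) → Fin (n+1)) ∧
              ((Fin.snoc t' y : Fin (m+2) → Fin (n+1)) 0).val = a ∧
              ((Fin.snoc t' y : Fin (m+2) → Fin (n+1)) (Fin.last (m+1))).val = b
            then ∏ q : Fin (m+1),
              A ((Fin.snoc t' y : Fin (m+2) → Fin (n+1)) q.castSucc).val
                ((Fin.snoc t' y : Fin (m+2) → Fin (n+1)) q.succ).val
            else 0) := by
    have e1 : seg n A (m+1) a b
        = ∑ z : Fin (n+1) × (Fin (m+1) → Fin (n+1)),
            (if StrictMono (Fin.snoc z.2 z.1 : Fin (m+2) → Fin (n+1)) ∧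
                ((Fin.snoc z.2 z.1 : Fin (m+2) → Fin (n+1)) 0).val = a ∧
                ((Fin.snoc z.2 z.1 : Fin (m+2) → Fin (n+1)) (Fin.last (m+1))).val = b
              then ∏ q : Fin (m+1),
                A ((Fin.snoc z.2 z.1 : Fin (m+2) → Fin (n+1)) q.castSucc).val
                  ((Fin.snoc z.2 z.1 : Fin (m+2) → Fin (n+1)) q.succ).val
              else 0) := by
      rw [seg, Finset.sum_filter]
      exact (Fintype.sum_equiv (Fin.snocEquiv fun _ => Fin (n+1)) _ _ fun z => rfl).symm
    rw [e1, Fintype.sum_prod_type]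
  rw [step1]
  have step2 : ∀ (y : Fin (n+1)) (t' : Fin (m+1) → Fin (n+1)),
      (if StrictMono (Fin.snoc t' y : Fin (m+2) → Fin (n+1)) ∧
          ((Fin.snoc t' y : Fin (m+2) → Fin (n+1)) 0).val = a ∧
          ((Fin.snoc t' y : Fin (m+2) → Fin (n+1)) (Fin.last (m+1))).val = b
        then ∏ q : Fin (m+1),
          A ((Fin.snoc t' y : Fin (m+2) → Fin (n+1)) q.castSucc).val
            ((Fin.snoc t' y : Fin (m+2) → Fin (n+1)) q.succ).val
        else 0)
      = (if y.val = b ∧ (t' (Fin.last m) < y ∧ StrictMono t' ∧ (t' 0).val = a)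
          then (∏ q : Fin m, A (t' q.castSucc).val (t' q.succ).val) * A (t' (Fin.last m)).val y.val
          else 0) := by
    intro y t'
    rw [prod_snoc]
    refine if_congr ?_ rfl rfl
    rw [strictMono_snoc_iff, snoc_zero', Fin.snoc_last]
    tauto
  simp only [step2]
  have hb' : b < n + 1 := by omega
  rw [Finset.sum_eq_single (⟨b, hb'⟩ : Fin (n+1))]
  · have step3 : ∀ t' : Fin (m+1) → Fin (n+1),
        (if ((⟨b, hb'⟩ : Fin (n+1))).val = b ∧ (t' (Fin.last m) < (⟨b, hb'⟩ : Fin (n+1)) ∧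
              StrictMono t' ∧ (t' 0).val = a)
          then (∏ q : Fin m, A (t' q.castSucc).val (t' q.succ).val) *
            A (t' (Fin.last m)).val ((⟨b, hb'⟩ : Fin (n+1))).val
          else 0)
        = (if (t' (Fin.last m)).val < b ∧ StrictMono t' ∧ (t' 0).val = a
            then (∏ q : Fin m, A (t' q.castSucc).val (t' q.succ).val) *
              A (t' (Fin.last m)).val b
            else 0) := by
      intro t'
      refine if_congr ?_ rfl rfl
      constructor
      · rintro ⟨-, h2⟩
        exact h2
      · intro hh
        exact ⟨rfl, hh⟩
    refine Eq.trans (Finset.sum_congr rfl fun t' _ => step3 t') ?_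
    rw [← Finset.sum_filter]
    rw [← Finset.sum_fiberwise_of_maps_to
      (g := fun t' : Fin (m+1) → Fin (n+1) => (t' (Fin.last m)).val)
      (t := Finset.range b) (fun t' ht' => by
        have hc := (Finset.mem_filter.mp ht').2
        simp only [Finset.mem_range]
        exact hc.1)]
    refine Finset.sum_congr rfl fun x hx => ?_
    simp only [Finset.mem_range] at hx
    rw [seg, Finset.sum_mul, Finset.filter_filter]
    refine Finset.sum_congr (Finset.filter_congr fun t' _ => ?_) fun t' ht' => ?_
    · constructor
      · rintro ⟨⟨h1, h2, h3⟩, h4⟩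
        exact ⟨h2, h3, h4⟩
      · rintro ⟨h1, h2, h3⟩
        exact ⟨⟨by omega, h1, h2⟩, h3⟩
    · have hv := (Finset.mem_filter.mp ht').2.2.2
      rw [hv]
  · intro y _ hy
    refine Finset.sum_eq_zero fun t' _ => ?_
    rw [if_neg]
    rintro ⟨h1, -⟩
    exact hy (Fin.ext h1)
  · intro hmem
    exact absurd (Finset.mem_univ _) hmem

lemma segP_zero (m a b h : ℕ) :
    segP n A m a b 0 h = if h = a then seg n A m a b else 0 := by
  split_ifs with hh
  · subst hh
    rw [segP, seg]
    refine Finset.sum_congr (Finset.filter_congr fun t _ => ?_) fun _ _ => rfl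
    constructor
    · rintro ⟨h1, h2, h3, -⟩; exact ⟨h1, h2, h3⟩
    · rintro ⟨h1, h2, h3⟩; exact ⟨h1, h2, h3, h2⟩
  · rw [segP, Finset.filter_false_of_mem, Finset.sum_empty]
    rintro t - ⟨-, h2, -, h4⟩
    exact hh (by omega)

lemma segP_last (m a b : ℕ) :
    segP n A m a b (Fin.last m) b = seg n A m a b := by
  rw [segP, seg]
  refine Finset.sum_congr (Finset.filter_congr fun t _ => ?_) fun _ _ => rfl
  constructor
  · rintro ⟨h1, h2, h3, -⟩; exact ⟨h1, h2, h3⟩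
  · rintro ⟨h1, h2, h3⟩; exact ⟨h1, h2, h3, h3⟩

lemma seg_eq_sum_segP (m a b : ℕ) (p : Fin (m+1)) :
    seg n A m a b = ∑ h' ∈ Finset.range (n+1), segP n A m a b p h' := by
  rw [seg]
  rw [← Finset.sum_fiberwise_of_maps_to
    (g := fun t : Fin (m+1) → Fin (n+1) => (t p).val)
    (t := Finset.range (n+1)) (fun t _ => Finset.mem_range.mpr (t p).isLt)]
  refine Finset.sum_congr rfl fun h' _ => ?_
  rw [segP, Finset.filter_filter]
  refine Finset.sum_congr (Finset.filter_congr fun t _ => ?_) fun _ _ => rfl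
  constructor
  · rintro ⟨⟨h1, h2, h3⟩, h4⟩; exact ⟨h1, h2, h3, h4⟩
  · rintro ⟨h1, h2, h3, h4⟩; exact ⟨⟨h1, h2, h3⟩, h4⟩

lemma seg_succ {m : ℕ} (a b : ℕ) (ha : a ≤ n) :
    seg n A (m+1) a b = ∑ x ∈ Finset.Icc (a+1) n, A a x * seg n A m x b := by
  rw [← segP_last n A (m+1) a b,
    show (Fin.last (m+1)) = (Fin.last m).succ from (Fin.succ_last m).symm,
    segP_succ n A a b (Fin.last m) b ha]
  exact Finset.sum_congr rfl fun x _ => by rw [segP_last]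

lemma split_lemma (m : ℕ) :
    ∀ p a h, a ≤ n →
      segP n A (m + p) a n (⟨p, by omega⟩ : Fin (m + p + 1)) h
        = seg n A p a h * seg n A m h n := by
  intro p
  induction p with
  | zero =>
    intro a h ha
    rw [show (⟨0, by omega⟩ : Fin (m + 0 + 1)) = 0 from rfl, segP_zero, seg_zero n A ha]
    by_cases hha : h = a
    · subst hha
      simp
    · rw [if_neg hha, if_neg (fun hh => hha hh.symm), zero_mul]
  | succ p ih =>
    intro a h ha
    show segP n A ((m + p) + 1) a n (Fin.succ (⟨p, by omega⟩ : Fin (m + p + 1))) h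
        = seg n A (p + 1) a h * seg n A m h n
    rw [segP_succ n A a n (⟨p, by omega⟩ : Fin (m + p + 1)) h ha,
      seg_succ n A a h ha, Finset.sum_mul]
    refine Finset.sum_congr rfl fun x hx => ?_
    simp only [Finset.mem_Icc] at hx
    rw [ih x h (by omega)]
    ring

end DPSplitAux

open DPSplitAux in
/-- split identity.  The total weight of all `k`-segmentations
of `[1..n]` whose `p`-th boundary equals `h` is `L_{p,h} · R_{k−p,h}`, and
consequently `L_{k,n} = Σ_h L_{p,h} · R_{k−p,h}`. -/
theorem dp_split_identity (n k p h : ℕ)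
    (hk : 1 ≤ k) (hp1 : 1 ≤ p) (hp2 : p ≤ k - 1)
    (hh1 : p ≤ h) (hh2 : h ≤ n - (k - p)) (hn : k ≤ n)
    (A : ℕ → ℕ → ℝ) (hA : ∀ i j, 0 ≤ A i j)
    (L R : ℕ → ℕ → ℝ)
    (hL00 : L 0 0 = 1) (hL0 : ∀ j, 0 < j → L 0 j = 0)
    (hLrec : ∀ k' j, 1 ≤ j →
      L (k' + 1) j = ∑ h' ∈ Finset.Icc k' (j - 1), L k' h' * A h' j)
    (hR0n : R 0 n = 1) (hR0 : ∀ i, i < n → R 0 i = 0)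
    (hRrec : ∀ k' i, i < n →
      R (k' + 1) i = ∑ h' ∈ Finset.Icc (i + 1) (n - k'), A i h' * R k' h') :
    (∑ t ∈ Finset.univ.filter (fun t : Fin (k + 1) → Fin (n + 1) =>
        StrictMono t ∧ t 0 = 0 ∧ t (Fin.last k) = Fin.last n ∧
        (t ⟨p, by omega⟩ : Fin (n + 1)).val = h),
      ∏ q : Fin k, A (t q.castSucc).val (t q.succ).val)
      = L p h * R (k - p) h
    ∧ L k n = ∑ h' ∈ Finset.Icc p (n - (k - p)), L p h' * R (k - p) h' := by
  -- identification of L with path sums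
  have L_eq : ∀ m j, j ≤ n → (1 ≤ j ∨ m = 0) → L m j = seg n A m 0 j := by
    intro m
    induction m with
    | zero =>
      intro j hj hj'
      rw [seg_zero n A (by omega)]
      rcases Nat.eq_zero_or_pos j with h0 | h0
      · subst h0; simpa using hL00
      · rw [hL0 j h0, if_neg (by omega)]
    | succ m ih =>
      intro j hjn hj'
      have hj : 1 ≤ j := by omega
      rw [hLrec m j hj, seg_snoc n A 0 j hjn]
      calc ∑ x ∈ Finset.Icc m (j-1), L m x * A x j
          = ∑ x ∈ Finset.Icc m (j-1), seg n A m 0 x * A x j := by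
            refine Finset.sum_congr rfl fun x hx => ?_
            simp only [Finset.mem_Icc] at hx
            rw [ih x (by omega) (by omega)]
        _ = ∑ x ∈ Finset.range j, seg n A m 0 x * A x j := by
            refine Finset.sum_subset (fun x hx => ?_) (fun x hx hx' => ?_)
            · simp only [Finset.mem_Icc] at hx
              simp only [Finset.mem_range]
              omega
            · simp only [Finset.mem_range] at hx
              simp only [Finset.mem_Icc] at hx'
              rw [seg_eq_zero_of_lt n A (by omega), zero_mul]
  -- identification of R with path sums
  have R_eq : ∀ m i, i ≤ n → (i < n ∨ m = 0) → R m i = seg n A m i n := by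
    intro m
    induction m with
    | zero =>
      intro i hi hi'
      rw [seg_zero n A hi]
      rcases Nat.lt_or_ge i n with h0 | h0
      · rw [hR0 i h0, if_neg (by omega)]
      · have : i = n := by omega
        subst this
        simpa using hR0n
    | succ m ih =>
      intro i hin hi'
      have hi : i < n := by omega
      rw [hRrec m i hi, seg_succ n A i n hin]
      calc ∑ x ∈ Finset.Icc (i+1) (n-m), A i x * R m x
          = ∑ x ∈ Finset.Icc (i+1) (n-m), A i x * seg n A m x n := by
            refine Finset.sum_congr rfl fun x hx => ?_
            simp only [Finset.mem_Icc] at hx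
            rw [ih x (by omega) (by omega)]
        _ = ∑ x ∈ Finset.Icc (i+1) n, A i x * seg n A m x n := by
            refine Finset.sum_subset (fun x hx => ?_) (fun x hx hx' => ?_)
            · simp only [Finset.mem_Icc] at hx ⊢
              omega
            · simp only [Finset.mem_Icc] at hx hx'
              rw [seg_eq_zero_of_lt n A (by omega), mul_zero]
  obtain ⟨m, rfl⟩ : ∃ m, k = m + p := ⟨k - p, by omega⟩
  have hm1 : 1 ≤ m := by omega
  have hkp : m + p - p = m := by omega
  simp only [hkp]
  have hh2' : h ≤ n - m := by rwa [hkp] at hh2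
  have hhn : h ≤ n := by omega
  have hhltn : h < n := by omega
  constructor
  · have e1 : (∑ t ∈ Finset.univ.filter (fun t : Fin (m + p + 1) → Fin (n + 1) =>
        StrictMono t ∧ t 0 = 0 ∧ t (Fin.last (m + p)) = Fin.last n ∧
        (t ⟨p, by omega⟩ : Fin (n + 1)).val = h),
          ∏ q : Fin (m + p), A (t q.castSucc).val (t q.succ).val)
        = segP n A (m + p) 0 n (⟨p, by omega⟩ : Fin (m + p + 1)) h := by
      rw [segP]
      refine Finset.sum_congr (Finset.filter_congr fun t _ => ?_) fun _ _ => rfl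
      constructor
      · rintro ⟨h1, h2, h3, h4⟩
        exact ⟨h1, by rw [h2]; rfl, by rw [h3]; exact Fin.val_last n, h4⟩
      · rintro ⟨h1, h2, h3, h4⟩
        exact ⟨h1, Fin.ext (by simpa using h2), Fin.ext (by simpa using h3), h4⟩
    rw [e1, split_lemma n A m p 0 h (by omega),
      L_eq p h hhn (Or.inl (by omega)), R_eq m h hhn (Or.inl hhltn)]
  · rw [L_eq (m + p) n le_rfl (Or.inl (by omega)),
      seg_eq_sum_segP n A (m + p) 0 n (⟨p, by omega⟩ : Fin (m + p + 1))]
    have e2 : ∀ h' ∈ Finset.range (n+1),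
        segP n A (m + p) 0 n (⟨p, by omega⟩ : Fin (m + p + 1)) h'
          = seg n A p 0 h' * seg n A m h' n :=
      fun h' _ => split_lemma n A m p 0 h' (by omega)
    rw [Finset.sum_congr rfl e2]
    symm
    calc ∑ h' ∈ Finset.Icc p (n - m), L p h' * R m h'
        = ∑ h' ∈ Finset.Icc p (n - m), seg n A p 0 h' * seg n A m h' n := by
          refine Finset.sum_congr rfl fun h' hx => ?_
          simp only [Finset.mem_Icc] at hx
          rw [L_eq p h' (by omega) (Or.inl (by omega)), R_eq m h' (by omega) (Or.inl (by omega))]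
      _ = ∑ h' ∈ Finset.range (n+1), seg n A p 0 h' * seg n A m h' n := by
          refine Finset.sum_subset (fun x hx => ?_) (fun x hx hx' => ?_)
          · simp only [Finset.mem_Icc] at hx
            simp only [Finset.mem_range]
            omega
          · simp only [Finset.mem_range] at hx
            simp only [Finset.mem_Icc, not_and, not_le] at hx'
            rcases Nat.lt_or_ge x p with hc | hc
            · rw [seg_eq_zero_of_lt n A (by omega), zero_mul]
            · rw [mul_comm, seg_eq_zero_of_lt n A (by omega), zero_mul]
end

section
/- (Jaakkola–Jordan quadratic bound for the logistic log-sigmoid.) For every θ ∈ ℝ and every ξ > 0, log σ(θ) ≥ θ/2 − λ(ξ)(θ² − ξ²) + log σ(ξ) − ξ/2, where σ(x) = 1/(1+e^{−x}) and λ(ξ) = tanh(ξ/2)/(4ξ), with equality when |θ| = ξ. -/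
open Real

/-- Logistic sigmoid. -/
noncomputable def sigm (x : ℝ) : ℝ := 1 / (1 + Real.exp (-x))

/-- Jaakkola–Jordan variational coefficient `λ(ξ) = tanh(ξ/2)/(4ξ)`. -/
noncomputable def jjLambda (ξ : ℝ) : ℝ := Real.tanh (ξ / 2) / (4 * ξ)

private lemma hasDerivAt_tanh' (x : ℝ) :
    HasDerivAt Real.tanh (1 / Real.cosh x ^ 2) x := by
  have h : Real.tanh = fun y => Real.sinh y / Real.cosh y := by
    funext y; exact Real.tanh_eq_sinh_div_cosh y
  rw [h]
  have := (Real.hasDerivAt_sinh x).div (Real.hasDerivAt_cosh x) (Real.cosh_pos x).ne'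
  refine this.congr_deriv ?_
  field_simp
  have := Real.cosh_sq_sub_sinh_sq x
  ring_nf
  nlinarith [Real.cosh_sq_sub_sinh_sq x]

/-- `tanh s / s` is antitone: for `0 < s ≤ t`, `s * tanh t ≤ t * tanh s`. -/
private lemma ratio_lemma {s t : ℝ} (hs : 0 < s) (hst : s ≤ t) :
    s * Real.tanh t ≤ t * Real.tanh s := by
  set φ : ℝ → ℝ := fun x => x * Real.tanh s - s * Real.tanh x with hφ
  have hd : ∀ x : ℝ, HasDerivAt φ (Real.tanh s - s * (1 / Real.cosh x ^ 2)) x := by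
    intro x
    have h1 : HasDerivAt (fun x : ℝ => x * Real.tanh s) (Real.tanh s) x := by
      simpa using (hasDerivAt_id x).mul_const (Real.tanh s)
    exact h1.sub ((hasDerivAt_tanh' x).const_mul s)
  have key : ∀ x : ℝ, s ≤ x → 0 ≤ Real.tanh s - s * (1 / Real.cosh x ^ 2) := by
    intro x hx
    have hcs : 0 < Real.cosh s := Real.cosh_pos s
    have hcx : 0 < Real.cosh x := Real.cosh_pos x
    have hcle : Real.cosh s ≤ Real.cosh x := by
      rw [Real.cosh_le_cosh]
      rw [abs_of_pos hs, abs_of_pos (lt_of_lt_of_le hs hx)]; exact hx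
    have h1 : s ≤ Real.sinh s * Real.cosh s := by
      have := (Real.self_le_sinh_iff (x := s)).2 hs.le
      nlinarith [Real.one_le_cosh s, Real.sinh_pos_iff.mpr hs]
    have htanh : s / Real.cosh s ^ 2 ≤ Real.tanh s := by
      rw [Real.tanh_eq_sinh_div_cosh, div_le_div_iff₀ (by positivity) hcs]
      nlinarith
    have h2 : s * (1 / Real.cosh x ^ 2) ≤ s / Real.cosh s ^ 2 := by
      rw [mul_one_div]
      apply div_le_div_of_nonneg_left hs.le (by positivity)
      nlinarith
    linarith
  have hmono : MonotoneOn φ (Set.Ici s) := by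
    apply monotoneOn_of_deriv_nonneg (convex_Ici s)
    · exact (Differentiable.continuous fun x => (hd x).differentiableAt).continuousOn
    · intro x hx
      exact (hd x).differentiableAt.differentiableWithinAt
    · intro x hx
      rw [interior_Ici, Set.mem_Ioi] at hx
      rw [(hd x).deriv]
      exact key x hx.le
  have h0 : φ s = 0 := by simp [hφ, mul_comm]
  have := hmono (Set.self_mem_Ici) (Set.mem_Ici.mpr hst) hst
  rw [h0] at this
  simpa [hφ, sub_nonneg, mul_comm] using this

/-- Core concavity tangent bound for `log cosh`. -/
private lemma core {b : ℝ} (hb : 0 < b) (a : ℝ) (ha : 0 ≤ a) :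
    Real.log (Real.cosh a)
      ≤ Real.log (Real.cosh b) + Real.tanh b / (2 * b) * (a ^ 2 - b ^ 2) := by
  set g : ℝ → ℝ := fun x =>
    Real.log (Real.cosh b) + Real.tanh b / (2 * b) * (x ^ 2 - b ^ 2)
      - Real.log (Real.cosh x) with hg
  have hd : ∀ x : ℝ, HasDerivAt g (Real.tanh b / b * x - Real.tanh x) x := by
    intro x
    have h1 : HasDerivAt (fun x : ℝ => Real.log (Real.cosh x)) (Real.tanh x) x := by
      have := (Real.hasDerivAt_cosh x).log (Real.cosh_pos x).ne'
      simpa [Real.tanh_eq_sinh_div_cosh] using this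
    have h2 : HasDerivAt (fun x : ℝ =>
        Real.log (Real.cosh b) + Real.tanh b / (2 * b) * (x ^ 2 - b ^ 2))
        (Real.tanh b / (2 * b) * (2 * x)) x := by
      have hx2 : HasDerivAt (fun x : ℝ => x ^ 2 - b ^ 2) (2 * x) x := by
        simpa using ((hasDerivAt_pow 2 x).sub_const (b ^ 2))
      exact (hx2.const_mul _).const_add _
    have := h2.sub h1
    refine this.congr_deriv ?_
    field_simp
  have hcont : Continuous g := Differentiable.continuous fun x => (hd x).differentiableAt
  have hgb : g b = 0 := by simp [hg]
  rcases le_or_gt b a with hba | hab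
  · -- a ≥ b : g monotone on [b, ∞)
    have hmono : MonotoneOn g (Set.Ici b) := by
      apply monotoneOn_of_deriv_nonneg (convex_Ici b) hcont.continuousOn
      · intro x _; exact (hd x).differentiableAt.differentiableWithinAt
      · intro x hx
        rw [interior_Ici, Set.mem_Ioi] at hx
        rw [(hd x).deriv]
        have := ratio_lemma hb hx.le
        rw [sub_nonneg, div_mul_eq_mul_div, le_div_iff₀ hb]
        linarith
    have := hmono Set.self_mem_Ici (Set.mem_Ici.mpr hba) hba
    rw [hgb] at this
    simpa [hg, sub_nonneg] using this
  · -- a < b : g antitone on [0, b]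
    have hanti : AntitoneOn g (Set.Icc 0 b) := by
      apply antitoneOn_of_deriv_nonpos (convex_Icc 0 b) hcont.continuousOn
      · intro x _; exact (hd x).differentiableAt.differentiableWithinAt
      · intro x hx
        rw [interior_Icc, Set.mem_Ioo] at hx
        rw [(hd x).deriv]
        have := ratio_lemma hx.1 hx.2.le
        rw [sub_nonpos, div_mul_eq_mul_div, div_le_iff₀ hb]
        linarith
    have := hanti (Set.mem_Icc.mpr ⟨ha, hab.le⟩) (Set.right_mem_Icc.mpr (ha.trans hab.le)) hab.le
    rw [hgb] at this
    simpa [hg, sub_nonneg] using this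

private lemma log_sigm (x : ℝ) :
    Real.log (sigm x) = x / 2 - Real.log (2 * Real.cosh (x / 2)) := by
  have hc : 0 < Real.cosh (x / 2) := Real.cosh_pos _
  have key : 1 + Real.exp (-x) = Real.exp (-(x / 2)) * (2 * Real.cosh (x / 2)) := by
    rw [Real.cosh_eq]
    have h1 : Real.exp (-(x/2)) * Real.exp (x/2) = 1 := by
      rw [← Real.exp_add]; norm_num
    have h2 : Real.exp (-(x/2)) * Real.exp (-(x/2)) = Real.exp (-x) := by
      rw [← Real.exp_add]; congr 1; ring
    linear_combination -h1 - h2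
  have hpos : (0:ℝ) < 1 + Real.exp (-x) := by positivity
  rw [sigm, Real.log_div one_ne_zero hpos.ne', Real.log_one, key,
    Real.log_mul (Real.exp_ne_zero _) (by positivity), Real.log_exp]
  ring

/-- Jaakkola–Jordan quadratic bound:
`log σ(θ) ≥ θ/2 − λ(ξ)(θ² − ξ²) + log σ(ξ) − ξ/2`, with equality when `|θ| = ξ`. -/
theorem jaakkola_jordan_bound (θ ξ : ℝ) (hξ : 0 < ξ) :
    Real.log (sigm θ)
      ≥ θ / 2 - jjLambda ξ * (θ ^ 2 - ξ ^ 2) + Real.log (sigm ξ) - ξ / 2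
    ∧ (|θ| = ξ →
        Real.log (sigm θ)
          = θ / 2 - jjLambda ξ * (θ ^ 2 - ξ ^ 2) + Real.log (sigm ξ) - ξ / 2) := by
  have hcθ : 0 < Real.cosh (θ / 2) := Real.cosh_pos _
  have hcξ : 0 < Real.cosh (ξ / 2) := Real.cosh_pos _
  have habs : Real.cosh (θ / 2) = Real.cosh (|θ| / 2) := by
    rw [← Real.cosh_abs (θ/2), abs_div, abs_two]
  constructor
  · have hcore := core (b := ξ / 2) (by linarith) (|θ| / 2) (by positivity)
    rw [← habs] at hcore
    have hsq : (|θ| / 2) ^ 2 - (ξ / 2) ^ 2 = (θ ^ 2 - ξ ^ 2) / 4 := by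
      rw [div_pow, div_pow, sq_abs]; ring
    rw [hsq] at hcore
    have hlam : Real.tanh (ξ / 2) / (2 * (ξ / 2)) * ((θ ^ 2 - ξ ^ 2) / 4)
        = jjLambda ξ * (θ ^ 2 - ξ ^ 2) := by
      rw [jjLambda, show 2 * (ξ / 2) = ξ by ring, div_mul_div_comm,
        div_mul_eq_mul_div, mul_comm ξ 4]
    rw [hlam] at hcore
    rw [log_sigm θ, log_sigm ξ, Real.log_mul two_ne_zero hcθ.ne',
      Real.log_mul two_ne_zero hcξ.ne']
    linarith
  · intro heq
    have hsq : θ ^ 2 = ξ ^ 2 := by rw [← sq_abs, heq]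
    have hcosh : Real.cosh (θ / 2) = Real.cosh (ξ / 2) := by
      rw [habs, heq]
    rw [log_sigm θ, log_sigm ξ, hcosh, hsq]
    ring
end
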